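/- (Proposition 6.6 / geometric interpretation.) Let 𝓗 be a finite-dimensional complex inner product space, H : ℝ → (𝓗 →L[ℂ] 𝓗) continuous with each H(t) self-adjoint, and U : ℝ → (𝓗 →L[ℂ] 𝓗) differentiable with U(0) = 1, U(t) unitary, and i·U′(t) = H(t) ∘ U(t). Let {ψ^{(j)}_k : 1 ≤ k ≤ d_j, 1 ≤ j ≤ n} be an orthonormal basis of 𝓗 and E_j := Σ_{k=1}^{d_j} |ψ^{(j)}_k⟩⟨ψ^{(j)}_k|. For each j let Ṽ_j solve i·Ṽ_j′(t) = C_j(t)·Ṽ_j(t), Ṽ_j(0) = 1, with C_j(t)_{p k} := ⟨ψ^{(j)}_p, H(t) ψ^{(j)}_k⟩, and set ψ̃^{(j)}_k(t) := Σ_p Ṽ_j(t)_{p k} · U(t)⁻¹ψ^{(j)}_p. Then Ũ(t) := Σ_{j,k} |ψ̃^{(j)}_k(t)⟩⟨ψ^{(j)}_k| is unitary for every t and is horizontal for the canonical connection: Σ_j E_j ∘ Ũ(t)⁻¹ ∘ Ũ′(t) ∘ E_j = 0 for all t. -/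

import Mathlib

/-- The rank-one operator `|u⟩⟨v| : x ↦ ⟨v, x⟩·u`. -/
noncomputable def ketbra {E : Type*} [NormedAddCommGroup E] [InnerProductSpace ℂ E]
    (u v : E) : E →L[ℂ] E :=
  (innerSL ℂ v).smulRight u

open ContinuousLinearMap

section Aux
set_option linter.unusedSectionVars false
variable {E : Type*} [NormedAddCommGroup E] [InnerProductSpace ℂ E]

lemma ketbra_apply (u v x : E) : ketbra u v x = (inner ℂ v x : ℂ) • u := rfl

lemma ketbra_zero_left (v : E) : ketbra (0 : E) v = 0 := by
  ext x; simp [ketbra_apply]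

lemma ketbra_zero_right (u : E) : ketbra u (0 : E) = 0 := by
  ext x; simp [ketbra_apply]

lemma comp_ketbra (A : E →L[ℂ] E) (u v : E) : A ∘L ketbra u v = ketbra (A u) v := by
  ext x; simp [ketbra_apply]

lemma ketbra_comp_ketbra (u v w z : E) :
    ketbra u v ∘L ketbra w z = (inner ℂ v w : ℂ) • ketbra u z := by
  ext x; simp [ketbra_apply, inner_smul_right, smul_smul, mul_comm]

variable [CompleteSpace E]

lemma adjoint_ketbra (u v : E) : adjoint (ketbra u v) = ketbra v u := by
  symm
  rw [eq_adjoint_iff]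
  intro x y
  simp [ketbra_apply, inner_smul_left, inner_smul_right, mul_comm, inner_conj_symm]

lemma ketbra_comp_clm (u v : E) (B : E →L[ℂ] E) :
    ketbra u v ∘L B = ketbra u (adjoint B v) := by
  ext x; simp [ketbra_apply, adjoint_inner_left]

lemma hasDerivAt_ketbra {f : ℝ → E} {f' : E} {x : ℝ} (v : E)
    (hf : HasDerivAt f f' x) :
    HasDerivAt (fun s => ketbra (f s) v) (ketbra f' v) x := by
  have h := ((ContinuousLinearMap.smulRightL ℂ E E (innerSL ℂ v)).restrictScalars
    ℝ).hasFDerivAt.comp_hasDerivAt x hf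
  exact h

lemma hasDerivAt_clm_apply' {f : ℝ → E →L[ℂ] E} {f' : E →L[ℂ] E} {x : ℝ} (v : E)
    (hf : HasDerivAt f f' x) :
    HasDerivAt (fun s => f s v) (f' v) x := by
  have h := ((ContinuousLinearMap.apply ℂ E v).restrictScalars
    ℝ).hasFDerivAt.comp_hasDerivAt x hf
  exact h

lemma hasDerivAt_adjoint {f : ℝ → E →L[ℂ] E} {f' : E →L[ℂ] E} {x : ℝ}
    (hf : HasDerivAt f f' x) :
    HasDerivAt (fun s => adjoint (f s)) (adjoint f') x := by
  simpa [star_eq_adjoint] using hf.star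

lemma adjoint_sum {ι : Type*} (s : Finset ι) (f : ι → E →L[ℂ] E) :
    adjoint (∑ i ∈ s, f i) = ∑ i ∈ s, adjoint (f i) := by
  simp only [← star_eq_adjoint]
  exact star_sum s f

lemma comp_sum' {ι : Type*} (s : Finset ι) (A : E →L[ℂ] E) (f : ι → E →L[ℂ] E) :
    A ∘L (∑ i ∈ s, f i) = ∑ i ∈ s, A ∘L f i := by
  ext x; simp

lemma sum_comp' {ι : Type*} (s : Finset ι) (A : E →L[ℂ] E) (f : ι → E →L[ℂ] E) :
    (∑ i ∈ s, f i) ∘L A = ∑ i ∈ s, f i ∘L A := by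
  ext x; simp

end Aux

set_option maxHeartbeats 2000000 in
open ContinuousLinearMap in
/-- Proposition 6.6 (geometric interpretation): the lift
`Ũ(t) = Σ_{j,k} |ψ̃^{(j)}_k(t)⟩⟨ψ^{(j)}_k|` of the observable evolution is unitary and
horizontal for the canonical non-Abelian quantum connection associated with the
projections `E_j = Σ_k |ψ^{(j)}_k⟩⟨ψ^{(j)}_k|`. -/
theorem lift_is_horizontal
    {𝓗 : Type*} [NormedAddCommGroup 𝓗] [InnerProductSpace ℂ 𝓗] [FiniteDimensional ℂ 𝓗]
    (Ham : ℝ → 𝓗 →L[ℂ] 𝓗) (hHcont : Continuous Ham)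
    (hHsa : ∀ t, IsSelfAdjoint (Ham t))
    (U U' : ℝ → 𝓗 →L[ℂ] 𝓗)
    (hU0 : U 0 = 1)
    (hUuni : ∀ t, adjoint (U t) ∘L U t = 1 ∧ U t ∘L adjoint (U t) = 1)
    (hUderiv : ∀ t, HasDerivAt U (U' t) t)
    (hSch : ∀ t, Complex.I • U' t = Ham t ∘L U t)
    (n : ℕ) (d : Fin n → ℕ) (ψ : (j : Fin n) → Fin (d j) → 𝓗)
    (hon : Orthonormal ℂ (fun x : Σ j : Fin n, Fin (d j) => ψ x.1 x.2))
    (hbasis : Submodule.span ℂ (Set.range fun x : Σ j : Fin n, Fin (d j) => ψ x.1 x.2) = ⊤)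
    (E : Fin n → 𝓗 →L[ℂ] 𝓗)
    (hE : ∀ j, E j = ∑ k, ketbra (ψ j k) (ψ j k))
    (C : (j : Fin n) → ℝ → Matrix (Fin (d j)) (Fin (d j)) ℂ)
    (hC : ∀ j t p k, C j t p k = (inner ℂ (ψ j p) (Ham t (ψ j k)) : ℂ))
    (V V' : (j : Fin n) → ℝ → Matrix (Fin (d j)) (Fin (d j)) ℂ)
    (hV0 : ∀ j, V j 0 = 1)
    (hVderiv : ∀ j t p k, HasDerivAt (fun s => V j s p k) (V' j t p k) t)
    (hVode : ∀ j t, Complex.I • V' j t = C j t * V j t)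
    (ψtil : (j : Fin n) → Fin (d j) → ℝ → 𝓗)
    (hψtil : ∀ j k t, ψtil j k t = ∑ p, V j t p k • (adjoint (U t)) (ψ j p))
    (Util : ℝ → 𝓗 →L[ℂ] 𝓗)
    (hUtil : ∀ t, Util t = ∑ j, ∑ k, ketbra (ψtil j k t) (ψ j k)) :
    ∀ t, (adjoint (Util t) ∘L Util t = 1 ∧ Util t ∘L adjoint (Util t) = 1) ∧
      ∃ D : 𝓗 →L[ℂ] 𝓗, HasDerivAt Util D t ∧
        ∑ j, E j ∘L adjoint (Util t) ∘L D ∘L E j = 0 := by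
  intro t
  -- basic inner-product facts for the basis
  have hinner : ∀ (i i' : Σ j : Fin n, Fin (d j)),
      (inner ℂ (ψ i.1 i.2) (ψ i'.1 i'.2) : ℂ) = if i = i' then 1 else 0 :=
    orthonormal_iff_ite.mp hon
  have hinner' : ∀ (j : Fin n) (p q : Fin (d j)),
      (inner ℂ (ψ j p) (ψ j q) : ℂ) = if p = q then 1 else 0 := by
    intro j p q
    simpa [Sigma.mk.inj_iff] using hinner ⟨j, p⟩ ⟨j, q⟩
  have hinner0 : ∀ (j j' : Fin n) (p : Fin (d j)) (q : Fin (d j')), j ≠ j' →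
      (inner ℂ (ψ j p) (ψ j' q) : ℂ) = 0 := by
    intro j j' p q hne
    simpa [Sigma.mk.inj_iff, hne] using hinner ⟨j, p⟩ ⟨j', q⟩
  -- completeness
  have hone : ∑ i : Σ j : Fin n, Fin (d j), ketbra (ψ i.1 i.2) (ψ i.1 i.2) = (1 : 𝓗 →L[ℂ] 𝓗) := by
    set b : OrthonormalBasis (Σ j : Fin n, Fin (d j)) ℂ 𝓗 := OrthonormalBasis.mk hon hbasis.ge
      with hb
    ext x
    have hx := b.sum_repr x
    simp only [OrthonormalBasis.repr_apply_apply] at hx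
    simpa [ketbra_apply, hb, OrthonormalBasis.coe_mk] using hx
  -- C is hermitian
  have hCherm : ∀ (s : ℝ) (j : Fin n) (p q : Fin (d j)),
      (starRingEnd ℂ) (C j s p q) = C j s q p := by
    intro s j p q
    have hsa : adjoint (Ham s) = Ham s := by rw [← star_eq_adjoint]; exact hHsa s
    rw [hC, hC, inner_conj_symm]
    calc (inner ℂ (Ham s (ψ j q)) (ψ j p) : ℂ)
        = (inner ℂ ((adjoint (Ham s)) (ψ j q)) (ψ j p) : ℂ) := by rw [hsa]
      _ = inner ℂ (ψ j q) (Ham s (ψ j p)) := adjoint_inner_left _ _ _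
  -- entrywise ODE for V
  have hV'e : ∀ (j : Fin n) (s : ℝ) (p k : Fin (d j)),
      V' j s p k = -Complex.I * ∑ q, C j s p q * V j s q k := by
    intro j s p k
    have h := congrArg (fun M => M p k) (hVode j s)
    simp only [Matrix.smul_apply, Matrix.mul_apply, smul_eq_mul] at h
    linear_combination (-Complex.I) * h + (V' j s p k) * Complex.I_sq
  -- V is unitary
  have hVuni : ∀ (j : Fin n) (s : ℝ) (p k : Fin (d j)),
      (∑ q, (starRingEnd ℂ) (V j s q p) * V j s q k) = if p = k then 1 else 0 := by
    intro j s p k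
    have hg : ∀ u : ℝ, HasDerivAt (fun r => ∑ q, (starRingEnd ℂ) (V j r q p) * V j r q k)
        (0 : ℂ) u := by
      intro u
      have h1 : HasDerivAt (fun r => ∑ q, (starRingEnd ℂ) (V j r q p) * V j r q k)
          (∑ q ∈ Finset.univ, ((starRingEnd ℂ) (V' j u q p) * V j u q k
            + (starRingEnd ℂ) (V j u q p) * V' j u q k)) u := by
        apply HasDerivAt.fun_sum
        intro q _
        have hs : HasDerivAt (fun r => (starRingEnd ℂ) (V j r q p))
            ((starRingEnd ℂ) (V' j u q p)) u := by
          simpa [RCLike.star_def] using (hVderiv j u q p).star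
        exact hs.mul (hVderiv j u q k)
      have e1 : ∀ q : Fin (d j), (starRingEnd ℂ) (V' j u q p)
          = Complex.I * ∑ r, C j u r q * (starRingEnd ℂ) (V j u r p) := by
        intro q
        rw [hV'e, map_mul, map_sum]
        congr 1
        · simp [Complex.conj_I]
        · exact Finset.sum_congr rfl fun r _ => by rw [map_mul, hCherm]
      have hz : (∑ q ∈ Finset.univ, ((starRingEnd ℂ) (V' j u q p) * V j u q k
          + (starRingEnd ℂ) (V j u q p) * V' j u q k)) = 0 := by
        have ha : ∀ q : Fin (d j), (starRingEnd ℂ) (V' j u q p) * V j u q k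
            = ∑ r, Complex.I * C j u r q * (starRingEnd ℂ) (V j u r p) * V j u q k := by
          intro q
          rw [e1, Finset.mul_sum, Finset.sum_mul]
          exact Finset.sum_congr rfl fun r _ => by ring
        have hb : ∀ q : Fin (d j), (starRingEnd ℂ) (V j u q p) * V' j u q k
            = ∑ r, -(Complex.I * C j u q r * (starRingEnd ℂ) (V j u q p) * V j u r k) := by
          intro q
          have hm : (-Complex.I) * ∑ r, C j u q r * V j u r k
              = ∑ r, -Complex.I * (C j u q r * V j u r k) := Finset.mul_sum _ _ _
          rw [hV'e, hm, Finset.mul_sum]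
          exact Finset.sum_congr rfl fun r _ => by ring
        calc (∑ q ∈ Finset.univ, ((starRingEnd ℂ) (V' j u q p) * V j u q k
              + (starRingEnd ℂ) (V j u q p) * V' j u q k))
            = (∑ q : Fin (d j), ∑ r : Fin (d j),
                Complex.I * C j u r q * (starRingEnd ℂ) (V j u r p) * V j u q k)
              - ∑ q : Fin (d j), ∑ r : Fin (d j),
                Complex.I * C j u q r * (starRingEnd ℂ) (V j u q p) * V j u r k := by
              rw [Finset.sum_congr rfl fun q _ => by rw [ha q, hb q]]
              rw [Finset.sum_add_distrib, sub_eq_add_neg, ← Finset.sum_neg_distrib]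
              congr 1
              exact Finset.sum_congr rfl fun q _ => Finset.sum_neg_distrib _
          _ = 0 := by rw [Finset.sum_comm]; exact sub_self _
      rw [hz] at h1
      exact h1
    have hconst := is_const_of_deriv_eq_zero (f := fun r => ∑ q, (starRingEnd ℂ) (V j r q p) * V j r q k)
      (fun u => (hg u).differentiableAt) (fun u => (hg u).deriv) s 0
    rw [hconst, hV0 j]
    simp only [Matrix.one_apply, apply_ite]
    rcases eq_or_ne p k with h | h
    · simp [h]
    · simp only [if_neg h]
      simp [h, Ne.symm h]
  -- inner ℂ products involving U
  have hUadj_inner : ∀ (x y : 𝓗),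
      (inner ℂ ((adjoint (U t)) x) ((adjoint (U t)) y) : ℂ) = inner ℂ x y := by
    intro x y
    rw [adjoint_inner_left]
    have h2 : U t ((adjoint (U t)) y) = y := by
      have h3 := congrArg (fun A => A y) (hUuni t).2
      simpa using h3
    rw [h2]
  have hadjU' : U t ∘L adjoint (U' t) = Complex.I • Ham t := by
    have h := congrArg star (hSch t)
    rw [star_smul] at h
    have hcm : Ham t ∘L U t = Ham t * U t := rfl
    rw [hcm, star_mul] at h
    have hsH : star (Ham t) = Ham t := hHsa t
    rw [hsH] at h
    have hstarU' : star (U' t) = Complex.I • (star (U t) * Ham t) := by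
      have h4 := congrArg (fun A => Complex.I • A) h
      simpa [smul_smul, Complex.star_def, Complex.conj_I, Complex.I_mul_I] using h4
    have hUU : U t * star (U t) = 1 := by
      rw [star_eq_adjoint]; exact (hUuni t).2
    calc U t ∘L adjoint (U' t) = U t * star (U' t) := by rw [star_eq_adjoint]; rfl
      _ = Complex.I • (U t * (star (U t) * Ham t)) := by rw [hstarU', mul_smul_comm]
      _ = Complex.I • Ham t := by rw [← mul_assoc, hUU, one_mul]
  have hkey : ∀ x y : 𝓗, (inner ℂ ((adjoint (U t)) x) ((adjoint (U' t)) y) : ℂ)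
      = Complex.I * (inner ℂ x (Ham t y) : ℂ) := by
    intro x y
    rw [adjoint_inner_left]
    have h3 : U t ((adjoint (U' t)) y) = Complex.I • Ham t y := by
      have h4 := congrArg (fun A => A y) hadjU'
      simpa using h4
    rw [h3, inner_smul_right]
  -- orthonormality of the moving frame
  have htil_on : ∀ (j j' : Fin n) (k : Fin (d j)) (k' : Fin (d j')),
      (inner ℂ (ψtil j k t) (ψtil j' k' t) : ℂ)
      = if (⟨j, k⟩ : Σ j : Fin n, Fin (d j)) = ⟨j', k'⟩ then 1 else 0 := by
    intro j j' k k'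
    rw [hψtil, hψtil, sum_inner]
    have hterm : ∀ p : Fin (d j),
        (inner ℂ (V j t p k • (adjoint (U t)) (ψ j p))
          (∑ q, V j' t q k' • (adjoint (U t)) (ψ j' q)) : ℂ)
        = ∑ q, (starRingEnd ℂ) (V j t p k) * V j' t q k' * (inner ℂ (ψ j p) (ψ j' q) : ℂ) := by
      intro p
      rw [inner_sum]
      exact Finset.sum_congr rfl fun q _ => by
        rw [inner_smul_left, inner_smul_right, hUadj_inner]; ring
    rw [Finset.sum_congr rfl fun p _ => hterm p]
    by_cases hjj : j = j'
    · subst hjj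
      simp only [Sigma.mk.inj_iff, heq_eq_eq, true_and]
      have hcol : ∀ p : Fin (d j),
          (∑ q, (starRingEnd ℂ) (V j t p k) * V j t q k' * (inner ℂ (ψ j p) (ψ j q) : ℂ))
          = (starRingEnd ℂ) (V j t p k) * V j t p k' := by
        intro p
        rw [Finset.sum_eq_single p]
        · rw [hinner']; simp
        · intro q _ hq; rw [hinner']; simp [Ne.symm hq]
        · simp
      rw [Finset.sum_congr rfl fun p _ => hcol p]
      exact hVuni j t k k'
    · simp only [Sigma.mk.inj_iff, hjj, false_and, if_false]
      apply Finset.sum_eq_zero; intro p _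
      apply Finset.sum_eq_zero; intro q _
      rw [hinner0 j j' p q hjj]; ring
  -- derivative of the moving frame
  set ψd : (j : Fin n) → Fin (d j) → 𝓗 := fun j k =>
    ∑ p, (V j t p k • (adjoint (U' t)) (ψ j p) + V' j t p k • (adjoint (U t)) (ψ j p))
    with hψd
  have hψtilderiv : ∀ (j : Fin n) (k : Fin (d j)),
      HasDerivAt (fun s => ψtil j k s) (ψd j k) t := by
    intro j k
    have he : (fun s => ψtil j k s)
        = fun s => ∑ p, V j s p k • (adjoint (U s)) (ψ j p) := funext fun s => hψtil j k s
    rw [he, hψd]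
    apply HasDerivAt.fun_sum
    intro p _
    have hA : HasDerivAt (fun s => (adjoint (U s)) (ψ j p)) ((adjoint (U' t)) (ψ j p)) t :=
      hasDerivAt_clm_apply' _ (hasDerivAt_adjoint (hUderiv t))
    exact (hVderiv j t p k).smul hA
  have hUtilD : HasDerivAt Util (∑ j, ∑ k, ketbra (ψd j k) (ψ j k)) t := by
    have he : Util = fun s => ∑ j, ∑ k, ketbra (ψtil j k s) (ψ j k) := funext hUtil
    rw [he]
    apply HasDerivAt.fun_sum; intro j _
    apply HasDerivAt.fun_sum; intro k _
    exact hasDerivAt_ketbra _ (hψtilderiv j k)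
  -- sigma forms
  have hUtilSigma : Util t
      = ∑ i : Σ j : Fin n, Fin (d j), ketbra (ψtil i.1 i.2 t) (ψ i.1 i.2) := by
    rw [hUtil, ← Finset.univ_sigma_univ, Finset.sum_sigma]
  have hadjUtilSigma : adjoint (Util t)
      = ∑ i : Σ j : Fin n, Fin (d j), ketbra (ψ i.1 i.2) (ψtil i.1 i.2 t) := by
    rw [hUtilSigma, adjoint_sum]
    exact Finset.sum_congr rfl fun i _ => adjoint_ketbra _ _
  -- unitarity
  have h1 : adjoint (Util t) ∘L Util t = 1 := by
    rw [hadjUtilSigma, hUtilSigma, sum_comp']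
    have hrow : ∀ i : Σ j : Fin n, Fin (d j),
        (ketbra (ψ i.1 i.2) (ψtil i.1 i.2 t)) ∘L
          (∑ i' : Σ j : Fin n, Fin (d j), ketbra (ψtil i'.1 i'.2 t) (ψ i'.1 i'.2))
        = ketbra (ψ i.1 i.2) (ψ i.1 i.2) := by
      intro i
      rw [comp_sum']
      have hterm : ∀ i' : Σ j : Fin n, Fin (d j),
          ketbra (ψ i.1 i.2) (ψtil i.1 i.2 t) ∘L ketbra (ψtil i'.1 i'.2 t) (ψ i'.1 i'.2)
          = if i = i' then ketbra (ψ i.1 i.2) (ψ i'.1 i'.2) else 0 := by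
        intro i'
        rw [ketbra_comp_ketbra, htil_on]
        by_cases hii : i = i'
        · simp [hii]
        · have : (⟨i.1, i.2⟩ : Σ j : Fin n, Fin (d j)) = ⟨i'.1, i'.2⟩ ↔ i = i' := by
            constructor
            · intro h; rw [← Sigma.eta i, ← Sigma.eta i']; exact h
            · intro h; rw [h]
          rw [if_neg (by rw [this]; exact hii), if_neg hii, zero_smul]
      rw [Finset.sum_congr rfl fun i' _ => hterm i']
      simp
    rw [Finset.sum_congr rfl fun i _ => hrow i]
    exact hone
  have h2 : Util t ∘L adjoint (Util t) = 1 := by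
    have hl : (adjoint (Util t)).toLinearMap * (Util t).toLinearMap = 1 := by
      rw [Module.End.mul_eq_comp, ← ContinuousLinearMap.toLinearMap_comp, h1]
      rfl
    have hl2 := mul_eq_one_comm.mp hl
    rw [Module.End.mul_eq_comp] at hl2
    ext x
    have h4 := congrArg (fun f => f x) hl2
    simpa using h4
  -- the horizontality coefficients vanish
  have hcoef : ∀ (j : Fin n) (k k' : Fin (d j)),
      (inner ℂ (ψtil j k t) (ψd j k') : ℂ) = 0 := by
    intro j k k'
    rw [hψtil, sum_inner]
    apply Finset.sum_eq_zero
    intro p _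
    rw [inner_smul_left]
    have hval : (inner ℂ ((adjoint (U t)) (ψ j p)) (ψd j k') : ℂ) = 0 := by
      simp only [hψd]
      rw [inner_sum]
      have hq : ∀ q : Fin (d j),
          (inner ℂ ((adjoint (U t)) (ψ j p))
            (V j t q k' • (adjoint (U' t)) (ψ j q)
              + V' j t q k' • (adjoint (U t)) (ψ j q)) : ℂ)
          = Complex.I * (C j t p q * V j t q k')
            + V' j t q k' * (if p = q then 1 else 0) := by
        intro q
        rw [inner_add_right, inner_smul_right, inner_smul_right, hkey, hUadj_inner,
          hinner', ← hC]
        ring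
      rw [Finset.sum_congr rfl fun q _ => hq q, Finset.sum_add_distrib]
      have hc1 : (∑ q, V' j t q k' * (if p = q then 1 else 0)) = V' j t p k' := by
        rw [Finset.sum_eq_single p]
        · simp
        · intro q _ hq'; simp [Ne.symm hq']
        · simp
      rw [hc1, hV'e, ← Finset.mul_sum]
      ring
    rw [hval, mul_zero]
  -- conclusion
  refine ⟨⟨h1, h2⟩, ∑ j, ∑ k, ketbra (ψd j k) (ψ j k), hUtilD, ?_⟩
  apply Finset.sum_eq_zero
  intro j _
  have hEapp : ∀ x : 𝓗, E j x = ∑ k, (inner ℂ (ψ j k) x : ℂ) • ψ j k := by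
    intro x; rw [hE]; simp [ketbra_apply]
  have hEsame : ∀ k : Fin (d j), E j (ψ j k) = ψ j k := by
    intro k
    rw [hEapp, Finset.sum_eq_single k]
    · rw [hinner']; simp
    · intro q _ hq; rw [hinner']; simp [hq]
    · simp
  have hEdiff : ∀ (j' : Fin n) (k' : Fin (d j')), j ≠ j' → E j (ψ j' k') = 0 := by
    intro j' k' hne
    rw [hEapp]
    apply Finset.sum_eq_zero; intro q _
    rw [hinner0 j j' q k' hne, zero_smul]
  have hEadj : adjoint (E j) = E j := by
    rw [hE, adjoint_sum]
    exact Finset.sum_congr rfl fun k _ => adjoint_ketbra _ _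
  have hDE : (∑ j', ∑ k', ketbra (ψd j' k') (ψ j' k')) ∘L E j
      = ∑ k', ketbra (ψd j k') (ψ j k') := by
    rw [sum_comp', Finset.sum_eq_single j]
    · rw [sum_comp']
      exact Finset.sum_congr rfl fun k' _ => by
        rw [ketbra_comp_clm, hEadj, hEsame]
    · intro j' _ hne
      rw [sum_comp']
      apply Finset.sum_eq_zero; intro k' _
      rw [ketbra_comp_clm, hEadj, hEdiff j' k' (Ne.symm hne), ketbra_zero_right]
    · simp
  have hzero : ∀ k' : Fin (d j), E j ((adjoint (Util t)) (ψd j k')) = 0 := by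
    intro k'
    rw [hadjUtilSigma, ContinuousLinearMap.sum_apply, map_sum]
    apply Finset.sum_eq_zero
    intro i _
    obtain ⟨j1, k1⟩ := i
    rw [ketbra_apply, map_smul]
    by_cases hj : j = j1
    · subst hj
      rw [hcoef j k1 k', zero_smul]
    · rw [hEdiff j1 k1 hj, smul_zero]
  calc E j ∘L adjoint (Util t) ∘L (∑ j', ∑ k', ketbra (ψd j' k') (ψ j' k')) ∘L E j
      = E j ∘L adjoint (Util t) ∘L ∑ k', ketbra (ψd j k') (ψ j k') := by rw [hDE]
    _ = ∑ k', E j ∘L (adjoint (Util t) ∘L ketbra (ψd j k') (ψ j k')) := by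
        rw [comp_sum', comp_sum']
    _ = 0 := by
        apply Finset.sum_eq_zero; intro k' _
        rw [comp_ketbra, comp_ketbra, hzero k', ketbra_zero_left]
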